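/- arXiv:1909.04471 — 2 statements merged into one kernel-verified Lean document; each statement's English description precedes it below -/
import Mathlib

section
/- Let f ∈ Ω and let z ∈ ℂ with 0 < |z| < 4/5. Then f(z) ≠ 0 and, writing z·f'(z)/f(z) = u + i·v with u, v ∈ ℝ, one has (9u² − 18u + 9v² + 5)² − 16(9u² − 6u + 9v² + 1) < 0; i.e., z·f'(z)/f(z) lies in the interior of the cardioid bounding the region associated with the class S*_C. (That is, the S*_C-radius for the class Ω is 4/5.) -/
open Complex Metric

/-- The open unit disc in `ℂ`. -/
def unitDisc : Set ℂ := Metric.ball 0 1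

/-- `f ∈ 𝒜ₙ`: `f` is analytic on the unit disc with power series
`f(z) = z + ∑_{k=n+1}^∞ a_k z^k`. -/
def MemA (n : ℕ) (f : ℂ → ℂ) : Prop :=
  DifferentiableOn ℂ f unitDisc ∧
    ∃ a : ℕ → ℂ, ∀ z ∈ unitDisc, f z = z + ∑' k : ℕ, a k * z ^ (n + 1 + k)

/-- `f ∈ Ωₙ`: `f ∈ 𝒜ₙ` and `|z f'(z) - f(z)| < 1/2` on the unit disc. -/
def MemOmega (n : ℕ) (f : ℂ → ℂ) : Prop :=
  MemA n f ∧ ∀ z ∈ unitDisc, ‖z * deriv f z - f z‖ < 1 / 2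

section auxlemmas
open Set Filter Asymptotics Topology

lemma aux_dslope_diffOn {g : ℂ → ℂ} (hg : AnalyticOnNhd ℂ g (ball (0:ℂ) 1)) :
    DifferentiableOn ℂ (dslope g 0) (ball (0:ℂ) 1) := by
  intro b hb
  rcases eq_or_ne b 0 with rfl | hb0
  · obtain ⟨p, hp⟩ := hg 0 (by simp)
    exact (hp.has_fpower_series_dslope_fslope.analyticAt).differentiableAt.differentiableWithinAt
  · exact ((differentiableAt_dslope_of_ne hb0).2
      (hg b hb).differentiableAt).differentiableWithinAt


lemma aux_deriv_one {f : ℂ → ℂ} {a : ℕ → ℂ}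
    (hrep : ∀ w ∈ ball (0:ℂ) 1, f w = w + ∑' k : ℕ, a k * w ^ (1 + 1 + k)) :
    HasDerivAt f 1 0 := by
  have hf0 : f 0 = 0 := by
    have := hrep 0 (by simp)
    simpa using this
  by_cases hA : ∃ w : ℂ, w ∈ ball (0:ℂ) 1 ∧ w ≠ 0 ∧ Summable fun k => a k * w ^ (1 + 1 + k)
  · obtain ⟨w, hw, hw0, hsum⟩ := hA
    set S : ℂ → ℂ := fun x => ∑' k : ℕ, a k * x ^ (1 + 1 + k) with hS
    have hwpos : (0:ℝ) < ‖w‖ := norm_pos_iff.2 hw0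
    have hnorm : Summable fun k => ‖a k * w ^ (1 + 1 + k)‖ := summable_norm_iff.2 hsum
    set C : ℝ := ∑' k : ℕ, ‖a k * w ^ (1 + 1 + k)‖ with hC
    have hCk : ∀ k : ℕ, ‖a k‖ * ‖w‖ ^ (1 + 1 + k) ≤ C := by
      intro k
      have h := Summable.le_tsum hnorm k (fun j _ => norm_nonneg _)
      rwa [norm_mul, norm_pow] at h
    set M : ℝ := C / ‖w‖ ^ 2 with hM
    have hM0 : 0 ≤ M := by
      apply div_nonneg _ (by positivity)
      exact le_trans (by positivity) (hCk 0)
    -- bound on S for small x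
    have hbound : ∀ x : ℂ, ‖x‖ ≤ ‖w‖ / 2 → ‖S x‖ ≤ 2 * M * ‖x‖ ^ 2 := by
      intro x hx
      have hterm : ∀ k : ℕ, ‖a k * x ^ (1 + 1 + k)‖ ≤ ‖x‖ ^ 2 * (M * (1 / 2) ^ k) := by
        intro k
        have h1 : ‖a k * x ^ (1 + 1 + k)‖ = ‖a k‖ * (‖x‖ ^ 2 * ‖x‖ ^ k) := by
          rw [norm_mul, norm_pow]; ring
        have h2 : ‖x‖ ^ k ≤ (‖w‖ / 2) ^ k := by
          exact pow_le_pow_left₀ (norm_nonneg _) hx k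
        have h3 : ‖a k‖ * (‖w‖ / 2) ^ k ≤ M * (1 / 2) ^ k := by
          rw [hM, div_mul_eq_mul_div, le_div_iff₀ (by positivity)]
          calc ‖a k‖ * (‖w‖ / 2) ^ k * ‖w‖ ^ 2
              = ‖a k‖ * ‖w‖ ^ (1 + 1 + k) * (1 / 2) ^ k := by
                rw [div_pow, div_pow, one_pow]; ring
            _ ≤ C * (1 / 2) ^ k := mul_le_mul_of_nonneg_right (hCk k) (by positivity)
        calc ‖a k * x ^ (1 + 1 + k)‖ = ‖a k‖ * ‖x‖ ^ k * ‖x‖ ^ 2 := by rw [h1]; ring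
          _ ≤ ‖a k‖ * (‖w‖ / 2) ^ k * ‖x‖ ^ 2 := by
              apply mul_le_mul_of_nonneg_right _ (by positivity)
              exact mul_le_mul_of_nonneg_left h2 (norm_nonneg _)
          _ ≤ M * (1 / 2) ^ k * ‖x‖ ^ 2 := by
              apply mul_le_mul_of_nonneg_right h3 (by positivity)
          _ = ‖x‖ ^ 2 * (M * (1 / 2) ^ k) := by ring
      have hsum2 : Summable fun k : ℕ => ‖x‖ ^ 2 * (M * (1 / 2) ^ k) :=
        (((summable_geometric_of_lt_one (by norm_num) (by norm_num)).mul_left M).mul_left _)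
      have hsum1 : Summable fun k : ℕ => ‖a k * x ^ (1 + 1 + k)‖ :=
        Summable.of_nonneg_of_le (fun k => norm_nonneg _) hterm hsum2
      calc ‖S x‖ ≤ ∑' k : ℕ, ‖a k * x ^ (1 + 1 + k)‖ := norm_tsum_le_tsum_norm hsum1
        _ ≤ ∑' k : ℕ, ‖x‖ ^ 2 * (M * (1 / 2) ^ k) :=
            Summable.tsum_le_tsum hterm hsum1 hsum2
        _ = ‖x‖ ^ 2 * (M * (1 - 1 / 2)⁻¹) := by
            rw [tsum_mul_left, tsum_mul_left, tsum_geometric_of_lt_one (by norm_num) (by norm_num)]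
        _ = 2 * M * ‖x‖ ^ 2 := by norm_num; ring
    have hS0 : S 0 = 0 := by simp [hS]
    have hSderiv : HasDerivAt S 0 0 := by
      rw [hasDerivAt_iff_isLittleO]
      have hbig : (fun x : ℂ => S x) =O[𝓝 0] fun x : ℂ => x ^ 2 := by
        apply IsBigO.of_bound (2 * M)
        have hball : Metric.ball (0:ℂ) (‖w‖ / 2) ∈ 𝓝 (0:ℂ) := ball_mem_nhds _ (by positivity)
        filter_upwards [hball] with x hx
        have := hbound x (le_of_lt (by simpa [mem_ball, dist_zero_right] using hx))
        simpa [norm_pow] using this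
      have hlit : (fun x : ℂ => x ^ 2) =o[𝓝 0] fun x : ℂ => x := isLittleO_pow_id (by norm_num)
      have := hbig.trans_isLittleO hlit
      simpa [hS0] using this
    have heq : f =ᶠ[𝓝 (0:ℂ)] fun x => x + S x := by
      filter_upwards [ball_mem_nhds (0:ℂ) one_pos] with x hx
      exact hrep x hx
    have : HasDerivAt (fun x : ℂ => x + S x) (1 + 0) 0 := (hasDerivAt_id 0).add hSderiv
    simpa using this.congr_of_eventuallyEq heq
  · push_neg at hA
    have heq : f =ᶠ[𝓝 (0:ℂ)] id := by
      filter_upwards [ball_mem_nhds (0:ℂ) one_pos] with x hx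
      rcases eq_or_ne x 0 with rfl | hx0
      · simpa using hf0
      · have hns := hA x hx hx0
        have := hrep x hx
        rw [tsum_eq_zero_of_not_summable hns] at this
        simpa using this
    exact (hasDerivAt_id 0).congr_of_eventuallyEq heq

end auxlemmas

set_option maxHeartbeats 1000000 in
theorem stmt_18 (f : ℂ → ℂ) (hf : MemOmega 1 f) (z : ℂ) (hz0 : 0 < ‖z‖) (hz : ‖z‖ < 4 / 5) :
    f z ≠ 0 ∧
      (9 * (z * deriv f z / f z).re ^ 2 - 18 * (z * deriv f z / f z).re +
          9 * (z * deriv f z / f z).im ^ 2 + 5) ^ 2 -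
        16 * (9 * (z * deriv f z / f z).re ^ 2 - 6 * (z * deriv f z / f z).re +
          9 * (z * deriv f z / f z).im ^ 2 + 1) < 0 := by
  open Set Filter Asymptotics Topology in
  obtain ⟨⟨hdiff', ⟨a, hrep'⟩⟩, hbound'⟩ := hf
  have hdiff : DifferentiableOn ℂ f (ball (0:ℂ) 1) := hdiff'
  have hrep : ∀ w ∈ ball (0:ℂ) 1, f w = w + ∑' k : ℕ, a k * w ^ (1 + 1 + k) := hrep'
  have hbound : ∀ x ∈ ball (0:ℂ) 1, ‖x * deriv f x - f x‖ < 1 / 2 := hbound'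
  have hf0 : f 0 = 0 := by
    have := hrep 0 (by simp)
    simpa using this
  have hf'0 : HasDerivAt f 1 0 := aux_deriv_one hrep
  have hz1 : ‖z‖ < 1 := hz.trans (by norm_num)
  have hzD : z ∈ ball (0:ℂ) 1 := mem_ball_zero_iff.2 hz1
  have hzne : z ≠ 0 := norm_pos_iff.1 hz0
  have hfa : AnalyticOnNhd ℂ f (ball (0:ℂ) 1) := hdiff.analyticOnNhd isOpen_ball
  set g : ℂ → ℂ := fun x => x * deriv f x - f x with hgdef
  have hga : AnalyticOnNhd ℂ g (ball (0:ℂ) 1) := (analyticOnNhd_id.mul hfa.deriv).sub hfa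
  have hgd : DifferentiableOn ℂ g (ball (0:ℂ) 1) := hga.differentiableOn
  have hg0 : g 0 = 0 := by simp [hgdef, hf0]
  have hg'0 : deriv g 0 = 0 := by
    have h1 : DifferentiableAt ℂ (deriv f) 0 := (hfa.deriv 0 (by simp)).differentiableAt
    have h2 : DifferentiableAt ℂ f 0 := (hfa 0 (by simp)).differentiableAt
    have h3 : HasDerivAt g (1 * deriv f 0 + 0 * deriv (deriv f) 0 - deriv f 0) 0 :=
      ((hasDerivAt_id 0).mul h1.hasDerivAt).sub h2.hasDerivAt
    rw [h3.deriv]; ring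
  -- Schwarz twice
  have hmaps : MapsTo g (ball (0:ℂ) 1) (ball (g 0) (1/2)) := by
    intro x hx
    rw [hg0, mem_ball_zero_iff]
    exact hbound x hx
  have hh1 : ∀ x ∈ ball (0:ℂ) 1, ‖dslope g 0 x‖ ≤ 1/2 := by
    intro x hx
    have := Complex.norm_dslope_le_div_of_mapsTo_ball hgd (hmaps.mono_right ball_subset_closedBall) hx
    simpa using this
  have hh1d : DifferentiableOn ℂ (dslope g 0) (ball (0:ℂ) 1) := aux_dslope_diffOn hga
  have hh10 : dslope g 0 0 = 0 := by rw [dslope_same]; exact hg'0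
  have key : ∀ x ∈ ball (0:ℂ) 1, ‖g x‖ ≤ ‖x‖^2 / 2 := by
    intro x hx
    rcases eq_or_ne x 0 with rfl | hx0
    · simp [hg0]
    have hxpos : (0:ℝ) < ‖x‖ := norm_pos_iff.2 hx0
    have hstep : ∀ ε : ℝ, 0 < ε → ‖g x‖ ≤ (1/2 + ε) * ‖x‖^2 := by
      intro ε hε
      have hmaps2 : MapsTo (dslope g 0) (ball (0:ℂ) 1) (ball (dslope g 0 0) (1/2 + ε)) := by
        intro y hy
        rw [hh10, mem_ball_zero_iff]
        exact lt_of_le_of_lt (hh1 y hy) (by linarith)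
      have h4 := Complex.norm_dslope_le_div_of_mapsTo_ball hh1d (hmaps2.mono_right ball_subset_closedBall) hx
      rw [div_one] at h4
      rw [dslope_of_ne _ hx0, slope_def_field, hh10, sub_zero, sub_zero] at h4
      rw [dslope_of_ne _ hx0, slope_def_field, hg0, sub_zero, sub_zero] at h4
      rw [norm_div, norm_div] at h4
      rw [div_le_iff₀ hxpos, div_le_iff₀ hxpos] at h4
      calc ‖g x‖ ≤ (1/2 + ε) * ‖x‖ * ‖x‖ := h4
        _ = (1/2 + ε) * ‖x‖^2 := by ring
    by_contra hcon
    push_neg at hcon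
    have hd : 0 < ‖g x‖ - ‖x‖^2/2 := by linarith
    set ε : ℝ := (‖g x‖ - ‖x‖^2/2) / 2 / ‖x‖^2 with hεdef
    have hε : 0 < ε := div_pos (div_pos hd two_pos) (pow_pos hxpos 2)
    have h7 := hstep ε hε
    have h8 : ε * ‖x‖^2 = (‖g x‖ - ‖x‖^2/2) / 2 := by
      rw [hεdef, div_mul_cancel₀ _ (ne_of_gt (pow_pos hxpos 2))]
    have h9 : (1/2 + ε) * ‖x‖^2 = ‖x‖^2/2 + ε * ‖x‖^2 := by ring
    linarith
  -- F = dslope f 0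
  set F := dslope f 0 with hFdef
  have hFd : DifferentiableOn ℂ F (ball (0:ℂ) 1) := aux_dslope_diffOn hfa
  have hFa : AnalyticOnNhd ℂ F (ball (0:ℂ) 1) := hFd.analyticOnNhd isOpen_ball
  have hF0 : F 0 = 1 := by rw [hFdef, dslope_same]; exact hf'0.deriv
  have hFne : ∀ x : ℂ, x ≠ 0 → F x = f x / x := by
    intro x hx0
    rw [hFdef, dslope_of_ne _ hx0, slope_def_field, hf0, sub_zero, sub_zero]
  have hFderiv : ∀ x ∈ ball (0:ℂ) 1, x ≠ 0 → ‖deriv F x‖ ≤ 1/2 := by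
    intro x hx hx0
    have hfd : HasDerivAt f (deriv f x) x := (hfa x hx).differentiableAt.hasDerivAt
    have hdd : HasDerivAt (fun y : ℂ => f y / y)
        ((deriv f x * x - f x * 1) / x ^ 2) x := hfd.div (hasDerivAt_id x) hx0
    have heq : F =ᶠ[𝓝 x] fun y : ℂ => f y / y := by
      filter_upwards [isOpen_ne.mem_nhds hx0] with y hy
      exact hFne y hy
    rw [heq.deriv_eq, hdd.deriv]
    have hval : (deriv f x * x - f x * 1) / x ^ 2 = g x / x ^ 2 := by
      rw [hgdef]; ring_nf
    rw [hval, norm_div]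
    have hxpos : (0:ℝ) < ‖x‖ := norm_pos_iff.2 hx0
    have hx2 : (0:ℝ) < ‖x ^ 2‖ := by
      rw [norm_pow]; exact pow_pos hxpos 2
    rw [div_le_iff₀ hx2, norm_pow]
    have := key x hx
    nlinarith [this]
  have hFbound : ∀ x ∈ ball (0:ℂ) 1, ‖deriv F x‖ ≤ 1/2 := by
    intro x hx
    rcases eq_or_ne x 0 with rfl | hx0
    · have hcont : ContinuousAt (deriv F) 0 :=
        ((hFa.deriv 0 (by simp)).differentiableAt).continuousAt
      have htend : Tendsto (fun y => ‖deriv F y‖) (𝓝[≠] (0:ℂ)) (𝓝 ‖deriv F 0‖) :=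
        (hcont.norm.continuousWithinAt).tendsto
      refine le_of_tendsto htend ?_
      filter_upwards [inter_mem_nhdsWithin {(0:ℂ)}ᶜ (ball_mem_nhds (0:ℂ) one_pos),
        self_mem_nhdsWithin] with y hy hy0
      exact hFderiv y hy.2 hy0
    · exact hFderiv x hx hx0
  have hMVT : ‖F z - F 0‖ ≤ 1/2 * ‖z - 0‖ :=
    Convex.norm_image_sub_le_of_norm_deriv_le
      (fun x hx => hFd.differentiableAt (isOpen_ball.mem_nhds hx))
      hFbound (convex_ball 0 1) (by simp) hzD
  rw [hF0, sub_zero] at hMVT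
  have hFz : ‖F z - 1‖ ≤ ‖z‖ / 2 := by linarith
  have hFzlow : 1 - ‖z‖/2 ≤ ‖F z‖ := by
    have habs := abs_norm_sub_norm_le (F z) 1
    rw [norm_one] at habs
    have h10 := (abs_le.1 habs).1
    linarith
  have hfzlow : ‖z‖ * (1 - ‖z‖/2) ≤ ‖f z‖ := by
    have : f z = z * F z := by
      rw [hFne z hzne]
      field_simp
    rw [this, norm_mul]
    exact mul_le_mul_of_nonneg_left hFzlow (norm_nonneg z)
  have hfzpos : (0:ℝ) < ‖f z‖ := lt_of_lt_of_le (by nlinarith) hfzlow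
  have hfzne : f z ≠ 0 := norm_pos_iff.1 hfzpos
  refine ⟨hfzne, ?_⟩
  set w : ℂ := z * deriv f z / f z with hwdef
  have hw1 : w - 1 = g z / f z := by
    rw [hwdef, hgdef]
    field_simp
  set r : ℝ := ‖w - 1‖ with hrdef
  have hr0 : 0 ≤ r := norm_nonneg _
  have hr : r < 2/3 := by
    have hval : r = ‖g z‖ / ‖f z‖ := by rw [hrdef, hw1, norm_div]
    have hkey := key z hzD
    have h5 : ‖g z‖ / ‖f z‖ ≤ (‖z‖^2/2) / (‖z‖ * (1 - ‖z‖/2)) := by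
      exact div_le_div₀ (by positivity) hkey (by nlinarith) hfzlow
    have h6 : (‖z‖^2/2) / (‖z‖ * (1 - ‖z‖/2)) < 2/3 := by
      rw [div_lt_iff₀ (by nlinarith)]
      nlinarith
    rw [hval]; linarith
  set u : ℝ := w.re
  set v : ℝ := w.im
  have hs : (u - 1)^2 + v^2 = r^2 := by
    have h11 : r^2 = Complex.normSq (w - 1) := by
      rw [hrdef, Complex.sq_norm]
    rw [h11, Complex.normSq_apply, Complex.sub_re, Complex.sub_im, Complex.one_re,
      Complex.one_im]
    ring
  have h4 : -r ≤ u - 1 := by nlinarith [sq_nonneg v, sq_nonneg (u - 1 + r)]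
  have hq : 81*r^4 - 216*r^2 + 192*r - 48 < 0 := by
    have hc : (3*r - 2) < 0 := by linarith
    have hcube : (3*r - 2)^3 < 0 := by
      exact Odd.pow_neg ⟨1, by norm_num⟩ hc
    have hprod : 3 * (3*r - 2)^3 * (r + 2) < 0 := by
      apply mul_neg_of_neg_of_pos (by linarith) (by linarith)
    nlinarith [hprod]
  have hA : 9 * u ^ 2 - 18 * u + 9 * v ^ 2 + 5 = 9 * r^2 - 4 := by linear_combination 9 * hs
  have hB : 9 * u ^ 2 - 6 * u + 9 * v ^ 2 + 1 = 9 * r^2 + 12*(u-1) + 4 := by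
    linear_combination 9 * hs
  rw [hA, hB]
  nlinarith [hq, h4, hr, hr0]
end

section
/- Let f ∈ Ω and let z ∈ ℂ with 0 < |z| < (e − 1)/e. Then f(z) ≠ 0 and, with w = z·f'(z)/f(z), one has w ≠ 2 and |log(w/(2 − w))| < 1, where log denotes the principal branch of the complex logarithm; i.e., w lies in the image of the modified sigmoid function 2/(1 + e^{−ζ}) on 𝔻. (That is, the S*_{SG}-radius for the class Ω is (e − 1)/e.) -/
open Complex Metric

open Filter Set Topology in
private lemma aux_f0 (f : ℂ → ℂ) (a : ℕ → ℂ)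
    (hser : ∀ z ∈ unitDisc, f z = z + ∑' k : ℕ, a k * z ^ (1 + 1 + k)) : f 0 = 0 := by
  have h0 : (0:ℂ) ∈ unitDisc := mem_ball_self one_pos
  rw [hser 0 h0]
  have h : ∀ k : ℕ, a k * (0:ℂ) ^ (1 + 1 + k) = 0 := by
    intro k; rw [zero_pow (by omega), mul_zero]
  simp only [h, tsum_zero, add_zero]

open Filter Set Topology in
private lemma aux_deriv1 (f : ℂ → ℂ) (hd : DifferentiableOn ℂ f unitDisc) (a : ℕ → ℂ)
    (hser : ∀ z ∈ unitDisc, f z = z + ∑' k : ℕ, a k * z ^ (1 + 1 + k)) :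
    deriv f 0 = 1 := by
  have hf0 : f 0 = 0 := aux_f0 f a hser
  have hmem : unitDisc ∈ 𝓝 (0:ℂ) := isOpen_ball.mem_nhds (mem_ball_self one_pos)
  have hdA : DifferentiableAt ℂ f 0 := hd.differentiableAt hmem
  have hslope : Tendsto (slope f 0) (𝓝[≠] (0:ℂ)) (𝓝 (deriv f 0)) :=
    hasDerivAt_iff_tendsto_slope.1 hdA.hasDerivAt
  by_cases hcase : ∃ᶠ z in 𝓝[≠] (0:ℂ), ¬ Summable (fun k => a k * z ^ (1+1+k))
  · haveI hne : (𝓝[≠] (0:ℂ) ⊓ 𝓟 {z | ¬ Summable (fun k => a k * z ^ (1+1+k))}).NeBot :=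
      frequently_iff_neBot.mp hcase
    set F := 𝓝[≠] (0:ℂ) ⊓ 𝓟 {z | ¬ Summable (fun k => a k * z ^ (1+1+k))} with hF
    have h1 : Tendsto (slope f 0) F (𝓝 (deriv f 0)) := hslope.mono_left inf_le_left
    have h2 : Tendsto (slope f 0) F (𝓝 1) := by
      refine Tendsto.congr' ?_ tendsto_const_nhds
      have hU : ∀ᶠ z in F, z ∈ unitDisc := by
        have h' : ∀ᶠ z in 𝓝 (0:ℂ), z ∈ unitDisc :=
          isOpen_ball.eventually_mem (mem_ball_self one_pos)
        exact (h'.filter_mono nhdsWithin_le_nhds).filter_mono inf_le_left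
      have hZ : ∀ᶠ z in F, z ≠ 0 := by
        have : ∀ᶠ z in 𝓝[≠] (0:ℂ), z ∈ ({(0:ℂ)}ᶜ : Set ℂ) := eventually_mem_nhdsWithin
        exact (this.filter_mono inf_le_left).mono (fun z hz => by simpa using hz)
      have hS : ∀ᶠ z in F, ¬ Summable (fun k => a k * z ^ (1+1+k)) := by
        rw [hF, eventually_inf_principal]
        exact Eventually.of_forall (fun z hz => hz)
      filter_upwards [hU, hZ, hS] with z hzU hz0 hns
      have hfz : f z = z := by
        rw [hser z hzU, tsum_eq_zero_of_not_summable hns, add_zero]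
      rw [slope_def_field, hfz, hf0, sub_zero, div_self hz0]
    exact tendsto_nhds_unique h1 h2
  · have hev : ∀ᶠ z in 𝓝[≠] (0:ℂ), Summable (fun k => a k * z ^ (1+1+k)) := by
      simpa [not_not] using (not_frequently.mp hcase)
    rw [eventually_nhdsWithin_iff, Metric.eventually_nhds_iff] at hev
    obtain ⟨ε, hε, hev⟩ := hev
    set ε₁ : ℝ := min ε 1 with hε₁def
    have hε₁ : 0 < ε₁ := lt_min hε one_pos
    have hε₁ε : ε₁ ≤ ε := min_le_left _ _
    have hε₁1 : ε₁ ≤ 1 := min_le_right _ _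
    set z₁ : ℂ := ((ε₁/2 : ℝ) : ℂ) with hz₁def
    have hz₁norm : ‖z₁‖ = ε₁/2 := by
      rw [hz₁def, Complex.norm_real, Real.norm_eq_abs, abs_of_pos (by linarith)]
    have hz₁0 : z₁ ≠ 0 := by
      rw [hz₁def]; exact_mod_cast (by positivity : (ε₁/2 : ℝ) ≠ 0)
    have hsum₁ : Summable (fun k => a k * z₁ ^ (1+1+k)) := by
      refine hev ?_ (by simpa [Set.mem_compl_iff] using hz₁0)
      rw [dist_zero_right, hz₁norm]; linarith
    have htend : Tendsto (fun k => ‖a k * z₁ ^ (1+1+k)‖) atTop (𝓝 0) := by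
      simpa using hsum₁.tendsto_atTop_zero.norm
    obtain ⟨C, hC⟩ := htend.bddAbove_range
    have hC' : ∀ k, ‖a k‖ * (ε₁/2) ^ (1+1+k) ≤ C := by
      intro k
      have := hC (Set.mem_range_self k)
      rwa [norm_mul, norm_pow, hz₁norm] at this
    have hC0 : 0 ≤ C := le_trans (by positivity) (hC' 0)
    have key : ∀ u : ℂ, u ≠ 0 → ‖u‖ < ε₁/4 → ‖slope f 0 u - 1‖ ≤ 8*C/ε₁^2 * ‖u‖ := by
      intro u hu0 hult
      have hunorm0 : (0:ℝ) < ‖u‖ := norm_pos_iff.mpr hu0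
      have huU : u ∈ unitDisc := by
        show u ∈ Metric.ball (0:ℂ) 1
        rw [mem_ball_zero_iff]; linarith
      set q : ℝ := ‖u‖/(ε₁/2) with hq
      have hq0 : 0 ≤ q := by positivity
      have hq2 : q ≤ 1/2 := by
        rw [hq, div_le_iff₀ (by linarith)]; linarith
      have hu_eq : ‖u‖ = ε₁/2 * q := by
        rw [hq]; field_simp
      have hterm : ∀ k, ‖a k * u^(1+1+k)‖ ≤ C*q^2 * (1/2:ℝ)^k := by
        intro k
        rw [norm_mul, norm_pow, hu_eq, mul_pow]
        calc ‖a k‖ * ((ε₁/2)^(1+1+k) * q^(1+1+k))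
            = (‖a k‖ * (ε₁/2)^(1+1+k)) * q^(1+1+k) := by ring
          _ ≤ C * q^(1+1+k) := mul_le_mul_of_nonneg_right (hC' k) (by positivity)
          _ = C * q^2 * q^k := by ring
          _ ≤ C*q^2 * (1/2:ℝ)^k :=
              mul_le_mul_of_nonneg_left (pow_le_pow_left₀ hq0 hq2 k)
                (by positivity)
      have hgeo : Summable (fun k : ℕ => C*q^2 * (1/2:ℝ)^k) :=
        (summable_geometric_of_lt_one (by norm_num) (by norm_num)).mul_left _
      have hsumnorm : Summable (fun k => ‖a k * u^(1+1+k)‖) :=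
        Summable.of_nonneg_of_le (fun k => norm_nonneg _) hterm hgeo
      have hT : ‖∑' k, a k * u^(1+1+k)‖ ≤ C*q^2*2 := by
        refine (norm_tsum_le_tsum_norm hsumnorm).trans ?_
        have h1 : ∑' k, ‖a k * u^(1+1+k)‖ ≤ ∑' k : ℕ, C*q^2*(1/2:ℝ)^k :=
          Summable.tsum_le_tsum hterm hsumnorm hgeo
        rwa [tsum_mul_left, tsum_geometric_of_lt_one (by norm_num) (by norm_num),
          show ((1:ℝ) - 1/2)⁻¹ = 2 by norm_num] at h1
      have hslope_eq : slope f 0 u - 1 = (∑' k, a k * u^(1+1+k)) / u := by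
        rw [slope_def_field, hser u huU, hf0, sub_zero, sub_zero]
        field_simp
        ring
      rw [hslope_eq, norm_div, div_le_iff₀ hunorm0]
      refine hT.trans (le_of_eq ?_)
      rw [hq]
      field_simp
      ring
    have h0 : Tendsto (fun u : ℂ => slope f 0 u - 1) (𝓝[≠] (0:ℂ)) (𝓝 0) := by
      have hbnd : ∀ᶠ u in 𝓝[≠] (0:ℂ), ‖slope f 0 u - 1‖ ≤ 8*C/ε₁^2 * ‖u‖ := by
        have hball : ∀ᶠ u in 𝓝 (0:ℂ), u ∈ Metric.ball (0:ℂ) (ε₁/4) :=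
          isOpen_ball.eventually_mem (mem_ball_self (by positivity))
        have hZ : ∀ᶠ u in 𝓝[≠] (0:ℂ), u ∈ ({(0:ℂ)}ᶜ : Set ℂ) := eventually_mem_nhdsWithin
        filter_upwards [hball.filter_mono nhdsWithin_le_nhds, hZ] with u hu hu0
        exact key u (by simpa using hu0) (mem_ball_zero_iff.mp hu)
      have hlim : Tendsto (fun u : ℂ => 8*C/ε₁^2 * ‖u‖) (𝓝[≠] (0:ℂ)) (𝓝 0) := by
        have h1 : Tendsto (fun u : ℂ => ‖u‖) (𝓝[≠] (0:ℂ)) (𝓝 0) := by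
          have := (continuous_norm.tendsto (0:ℂ)).mono_left (nhdsWithin_le_nhds (s := {(0:ℂ)}ᶜ))
          simpa using this
        have := h1.const_mul (8*C/ε₁^2)
        simpa [mul_comm] using this
      exact squeeze_zero_norm' hbnd hlim
    have h2 : Tendsto (slope f 0) (𝓝[≠] (0:ℂ)) (𝓝 1) := by
      have := h0.add_const 1
      simpa using this
    exact tendsto_nhds_unique hslope h2

open Filter Set Topology in
private lemma aux_bounds (f : ℂ → ℂ) (hd : DifferentiableOn ℂ f unitDisc)
    (hf0 : f 0 = 0) (hd1 : deriv f 0 = 1)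
    (hb : ∀ z ∈ unitDisc, ‖z * deriv f z - f z‖ < 1 / 2) :
    ∀ z ∈ unitDisc, ‖z * deriv f z - f z‖ ≤ ‖z‖^2/2 ∧ ‖f z - z‖ ≤ ‖z‖^2/2 := by
  have hd' : DifferentiableOn ℂ f (Metric.ball (0:ℂ) 1) := hd
  set g : ℂ → ℂ := fun w => w * deriv f w - f w with hgdef
  have han : AnalyticOnNhd ℂ f (Metric.ball (0:ℂ) 1) := hd'.analyticOnNhd isOpen_ball
  have hdf : DifferentiableOn ℂ (deriv f) (Metric.ball (0:ℂ) 1) := han.deriv.differentiableOn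
  have hgd : DifferentiableOn ℂ g (Metric.ball (0:ℂ) 1) := (differentiableOn_id.mul hdf).sub hd'
  have hg0 : g 0 = 0 := by simp [hgdef, hf0]
  have hgderiv : deriv g 0 = 0 := by
    have h2 : AnalyticAt ℂ (deriv f) 0 := han.deriv 0 (mem_ball_self one_pos)
    have hdf0 : HasDerivAt (deriv f) (deriv (deriv f) 0) 0 := h2.differentiableAt.hasDerivAt
    have hff : HasDerivAt f (deriv f 0) 0 :=
      (han 0 (mem_ball_self one_pos)).differentiableAt.hasDerivAt
    have : HasDerivAt g (1 * deriv f 0 + 0 * deriv (deriv f) 0 - deriv f 0) 0 :=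
      ((hasDerivAt_id 0).mul hdf0).sub hff
    simpa using this.deriv
  have hmap : MapsTo g (Metric.ball (0:ℂ) 1) (Metric.ball (g 0) (1/2)) := by
    rw [hg0]
    intro w hw
    rw [mem_ball_zero_iff]
    exact hb w hw
  have hg1le : ∀ w ∈ Metric.ball (0:ℂ) 1, ‖dslope g 0 w‖ ≤ 1/2 := by
    intro w hw
    have := Complex.norm_dslope_le_div_of_mapsTo_ball hgd (hmap.mono_right ball_subset_closedBall) hw
    simpa using this
  have hg1d : DifferentiableOn ℂ (dslope g 0) (Metric.ball (0:ℂ) 1) :=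
    (differentiableOn_dslope (ball_mem_nhds _ one_pos)).2 hgd
  have hg10 : dslope g 0 0 = 0 := by rw [dslope_same]; exact hgderiv
  have hg2le : ∀ w ∈ Metric.ball (0:ℂ) 1, ‖dslope (dslope g 0) 0 w‖ ≤ 1/2 := by
    intro w hw
    refine le_of_forall_gt_imp_ge_of_dense fun c hc => ?_
    have hmap2 : MapsTo (dslope g 0) (Metric.ball (0:ℂ) 1) (Metric.ball (dslope g 0 0) c) := by
      rw [hg10]
      intro u hu
      rw [mem_ball_zero_iff]
      exact lt_of_le_of_lt (hg1le u hu) hc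
    have := Complex.norm_dslope_le_div_of_mapsTo_ball hg1d (hmap2.mono_right ball_subset_closedBall) hw
    simpa using this
  have hgbound : ∀ w ∈ Metric.ball (0:ℂ) 1, ‖g w‖ ≤ ‖w‖^2/2 := by
    intro w hw
    have e1 : g w = w * dslope g 0 w := by
      have h := sub_smul_dslope g 0 w
      simp only [sub_zero, smul_eq_mul, hg0] at h
      rw [h]
    have e2 : dslope g 0 w = w * dslope (dslope g 0) 0 w := by
      have h := sub_smul_dslope (dslope g 0) 0 w
      simp only [sub_zero, smul_eq_mul, hg10] at h
      rw [h]
    rw [e1, norm_mul, e2, norm_mul]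
    have h2 := hg2le w hw
    have hwn : (0:ℝ) ≤ ‖w‖ := norm_nonneg w
    have hdn : (0:ℝ) ≤ ‖dslope (dslope g 0) 0 w‖ := norm_nonneg _
    nlinarith
  -- now the bound for f itself
  have hpd : DifferentiableOn ℂ (dslope f 0) (Metric.ball (0:ℂ) 1) :=
    (differentiableOn_dslope (ball_mem_nhds _ one_pos)).2 hd'
  have hp0 : dslope f 0 0 = 1 := by rw [dslope_same]; exact hd1
  have hpan : AnalyticOnNhd ℂ (dslope f 0) (Metric.ball (0:ℂ) 1) :=
    hpd.analyticOnNhd isOpen_ball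
  have hderp : ∀ ζ ∈ Metric.ball (0:ℂ) 1, ζ ≠ 0 →
      deriv (dslope f 0) ζ = g ζ / ζ^2 := by
    intro ζ hζ hζ0
    have heq : dslope f 0 =ᶠ[𝓝 ζ] fun w => f w / w := by
      filter_upwards [isOpen_compl_singleton.mem_nhds
        (by simpa [Set.mem_compl_iff] using hζ0 : ζ ∈ ({(0:ℂ)}ᶜ : Set ℂ))] with w hw
      have hw0 : w ≠ 0 := by simpa using hw
      rw [dslope_of_ne f hw0, slope_def_field, hf0, sub_zero, sub_zero]
    have hfder : HasDerivAt f (deriv f ζ) ζ := (han ζ hζ).differentiableAt.hasDerivAt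
    have hdiv : HasDerivAt (fun w => f w / w) ((deriv f ζ * ζ - f ζ * 1)/ζ^2) ζ :=
      hfder.div (hasDerivAt_id ζ) hζ0
    rw [heq.deriv_eq, hdiv.deriv, hgdef]
    ring_nf
  have hpbound : ∀ ζ ∈ Metric.ball (0:ℂ) 1, ‖deriv (dslope f 0) ζ‖ ≤ 1/2 := by
    intro ζ hζ
    rcases eq_or_ne ζ 0 with rfl | hζ0
    · have hcont : ContinuousAt (deriv (dslope f 0)) 0 :=
        ((hpan.deriv) 0 (mem_ball_self one_pos)).continuousAt
      have hten : Tendsto (fun w => ‖deriv (dslope f 0) w‖) (𝓝[≠] (0:ℂ))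
          (𝓝 ‖deriv (dslope f 0) 0‖) :=
        (hcont.tendsto.norm).mono_left nhdsWithin_le_nhds
      refine le_of_tendsto hten ?_
      have hball' : ∀ᶠ w in 𝓝 (0:ℂ), w ∈ Metric.ball (0:ℂ) 1 :=
        isOpen_ball.eventually_mem (mem_ball_self one_pos)
      have hZ : ∀ᶠ w in 𝓝[≠] (0:ℂ), w ∈ ({(0:ℂ)}ᶜ : Set ℂ) := eventually_mem_nhdsWithin
      filter_upwards [hball'.filter_mono nhdsWithin_le_nhds, hZ] with w hw hw0'
      have hw0 : w ≠ 0 := by simpa using hw0'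
      rw [hderp w hw hw0, norm_div, norm_pow]
      have hwpos : (0:ℝ) < ‖w‖ := norm_pos_iff.mpr hw0
      rw [div_le_iff₀ (by positivity)]
      nlinarith [hgbound w hw]
    · rw [hderp ζ hζ hζ0, norm_div, norm_pow]
      have hζpos : (0:ℝ) < ‖ζ‖ := norm_pos_iff.mpr hζ0
      rw [div_le_iff₀ (by positivity)]
      nlinarith [hgbound ζ hζ]
  have hmvt : ∀ w ∈ Metric.ball (0:ℂ) 1, ‖dslope f 0 w - 1‖ ≤ 1/2 * ‖w‖ := by
    intro w hw
    have := (convex_ball (0:ℂ) 1).norm_image_sub_le_of_norm_deriv_le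
      (fun x hx => hpd.differentiableAt (isOpen_ball.mem_nhds hx)) hpbound
      (mem_ball_self one_pos) hw
    simpa [hp0, hd1] using this
  intro z hz
  refine ⟨hgbound z hz, ?_⟩
  have e : f z - z = z * (dslope f 0 z - 1) := by
    have h := sub_smul_dslope f 0 z
    simp only [sub_zero, smul_eq_mul, hf0] at h
    rw [mul_sub, h]
    ring
  rw [e, norm_mul]
  have := hmvt z hz
  have hzn : (0:ℝ) ≤ ‖z‖ := norm_nonneg z
  nlinarith

open Filter Set Topology in
private lemma aux_real_log_sum (x : ℝ) (hx : |x| < 1) :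
    HasSum (fun n : ℕ => x^n/n) (-Real.log (1-x)) := by
  have hc := Complex.hasSum_taylorSeries_neg_log (z := (x:ℂ)) (by simpa using hx)
  have h1 : (1:ℂ) - (x:ℂ) = ((1 - x : ℝ) : ℂ) := by push_cast; ring
  rw [h1, ← Complex.ofReal_log (by rw [abs_lt] at hx; linarith)] at hc
  have hc' : HasSum (fun n : ℕ => ((x^n/n : ℝ) : ℂ)) (((-Real.log (1-x) : ℝ)) : ℂ) := by
    convert hc using 2 with n
    · push_cast; ring
    · push_cast; ring
  exact Complex.hasSum_ofReal.mp hc'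

open Filter Set Topology in
private lemma aux_log (v : ℂ) (hv : ‖v‖ < (Real.exp 1 - 1) / (Real.exp 1 + 1)) :
    ‖Complex.log ((1 + v) / (1 - v))‖ < 1 := by
  have he : (1:ℝ) < Real.exp 1 := by
    have := Real.add_one_le_exp 1; linarith
  have hk1 : (Real.exp 1 - 1)/(Real.exp 1 + 1) < 1 := by
    rw [div_lt_one (by linarith)]; linarith
  have ht1 : ‖v‖ < 1 := hv.trans hk1
  have hvre : |v.re| ≤ ‖v‖ := Complex.abs_re_le_norm v
  have hre1 : 0 < (1 + v).re := by
    rw [Complex.add_re, Complex.one_re]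
    rw [abs_le] at hvre
    linarith
  have hre2 : 0 < (1 - v).re := by
    rw [Complex.sub_re, Complex.one_re]
    rw [abs_le] at hvre
    linarith
  have h1 : (1:ℂ) + v ≠ 0 := by
    intro h; rw [h] at hre1; simp at hre1
  have h2 : (1:ℂ) - v ≠ 0 := by
    intro h; rw [h] at hre2; simp at hre2
  have harg1 : |Complex.arg (1+v)| < Real.pi/2 :=
    Complex.abs_arg_lt_pi_div_two_iff.mpr (Or.inl hre1)
  have harg2 : |Complex.arg (1-v)| < Real.pi/2 :=
    Complex.abs_arg_lt_pi_div_two_iff.mpr (Or.inl hre2)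
  have harg2ne : Complex.arg (1-v) ≠ Real.pi := by
    intro h
    rw [h, _root_.abs_of_pos Real.pi_pos] at harg2
    linarith [Real.pi_pos]
  have hloginv : Complex.log ((1-v)⁻¹) = -Complex.log (1-v) := Complex.log_inv _ harg2ne
  have harginv : Complex.arg ((1-v)⁻¹) = -Complex.arg (1-v) := by
    rw [Complex.arg_inv, if_neg harg2ne]
  have harg : Complex.arg (1+v) + Complex.arg ((1-v)⁻¹) ∈ Set.Ioc (-Real.pi) Real.pi := by
    rw [harginv]
    rw [abs_lt] at harg1 harg2
    constructor
    · linarith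
    · linarith
  have hsplit : Complex.log ((1+v)/(1-v)) = Complex.log (1+v) - Complex.log (1-v) := by
    rw [div_eq_mul_inv, Complex.log_mul h1 (inv_ne_zero h2) harg, hloginv]
    ring
  set t : ℝ := ‖v‖ with htdef
  have ht0 : 0 ≤ t := norm_nonneg v
  have hs1 : HasSum (fun n : ℕ => v^n/n) (-Complex.log (1-v)) :=
    Complex.hasSum_taylorSeries_neg_log ht1
  have hs2 : HasSum (fun n : ℕ => (-v)^n/n) (-Complex.log (1+v)) := by
    have := Complex.hasSum_taylorSeries_neg_log (z := -v) (by simpa using ht1)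
    simpa [sub_neg_eq_add] using this
  have hsum : HasSum (fun n : ℕ => v^n/n - (-v)^n/n)
      (Complex.log (1+v) - Complex.log (1-v)) := by
    have := hs1.sub hs2
    convert this using 1
    · rfl
    ring
  have hb : HasSum (fun n : ℕ => t^n/n - (-t)^n/n)
      (Real.log (1+t) - Real.log (1-t)) := by
    have hr1 := aux_real_log_sum t (by rwa [_root_.abs_of_nonneg ht0])
    have hr2 := aux_real_log_sum (-t) (by rwa [abs_neg, _root_.abs_of_nonneg ht0])
    rw [sub_neg_eq_add] at hr2
    have := hr1.sub hr2
    convert this using 1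
    · rfl
    ring
  have hcomp : ∀ n : ℕ, ‖v^n/(n:ℂ) - (-v)^n/n‖ ≤ t^n/n - (-t)^n/n := by
    intro n
    rcases Nat.even_or_odd n with hev | hod
    · rw [hev.neg_pow, sub_self, norm_zero, hev.neg_pow, sub_self]
    · rw [hod.neg_pow, hod.neg_pow, neg_div, neg_div, sub_neg_eq_add, sub_neg_eq_add]
      calc ‖v^n/(n:ℂ) + v^n/(n:ℂ)‖ ≤ ‖v^n/(n:ℂ)‖ + ‖v^n/(n:ℂ)‖ := norm_add_le _ _
        _ = t^n/n + t^n/n := by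
            rw [norm_div, norm_pow, Complex.norm_natCast]
  have hsn : Summable (fun n : ℕ => ‖v^n/(n:ℂ) - (-v)^n/n‖) :=
    Summable.of_nonneg_of_le (fun n => norm_nonneg _) hcomp hb.summable
  have hle : ‖Complex.log (1+v) - Complex.log (1-v)‖ ≤ Real.log (1+t) - Real.log (1-t) := by
    rw [← hsum.tsum_eq, ← hb.tsum_eq]
    exact (norm_tsum_le_tsum_norm hsn).trans (Summable.tsum_le_tsum hcomp hsn hb.summable)
  rw [hsplit]
  refine lt_of_le_of_lt hle ?_
  have h1t : 0 < 1 - t := by linarith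
  have hlogeq : Real.log (1+t) - Real.log (1-t) = Real.log ((1+t)/(1-t)) :=
    (Real.log_div (by linarith) (by linarith)).symm
  rw [hlogeq]
  have hmul : t * (Real.exp 1 + 1) < Real.exp 1 - 1 :=
    (lt_div_iff₀ (by linarith)).mp hv
  have hlt : (1+t)/(1-t) < Real.exp 1 := by
    rw [div_lt_iff₀ h1t]
    nlinarith
  calc Real.log ((1+t)/(1-t)) < Real.log (Real.exp 1) :=
        Real.log_lt_log (by positivity) hlt
    _ = 1 := Real.log_exp 1

theorem stmt_19 (f : ℂ → ℂ) (hf : MemOmega 1 f) (z : ℂ) (hz0 : 0 < ‖z‖)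
    (hz : ‖z‖ < (Real.exp 1 - 1) / Real.exp 1) :
    f z ≠ 0 ∧ (z * deriv f z / f z) ≠ 2 ∧
      ‖Complex.log ((z * deriv f z / f z) / (2 - z * deriv f z / f z))‖ < 1 := by
  obtain ⟨⟨hd, a, hser⟩, hb⟩ := hf
  have he : (1:ℝ) < Real.exp 1 := by
    have := Real.add_one_le_exp 1; linarith
  have hR1 : (Real.exp 1 - 1)/Real.exp 1 < 1 := by
    rw [div_lt_one (by linarith)]; linarith
  have hz1 : ‖z‖ < 1 := hz.trans hR1
  have hzU : z ∈ unitDisc := by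
    show z ∈ Metric.ball (0:ℂ) 1
    rwa [mem_ball_zero_iff]
  have hf0 : f 0 = 0 := aux_f0 f a hser
  have hd1 : deriv f 0 = 1 := aux_deriv1 f hd a hser
  obtain ⟨hgb, hfb⟩ := aux_bounds f hd hf0 hd1 hb z hzU
  have hflow : ‖z‖ - ‖z‖^2/2 ≤ ‖f z‖ := by
    have h1 : ‖z‖ ≤ ‖f z‖ + ‖f z - z‖ := by
      calc ‖z‖ = ‖f z + (z - f z)‖ := by ring_nf
        _ ≤ ‖f z‖ + ‖z - f z‖ := norm_add_le _ _
        _ = ‖f z‖ + ‖f z - z‖ := by rw [norm_sub_rev]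
    linarith
  have hfpos : 0 < ‖f z‖ := by nlinarith
  have hfz : f z ≠ 0 := norm_pos_iff.mp hfpos
  have hw1 : z * deriv f z / f z - 1 = (z * deriv f z - f z)/ f z := by
    field_simp
  have hwb : ‖z * deriv f z / f z - 1‖ ≤ ‖z‖/(2-‖z‖) := by
    rw [hw1, norm_div, div_le_div_iff₀ hfpos (by linarith : (0:ℝ) < 2 - ‖z‖)]
    nlinarith [norm_nonneg (z * deriv f z - f z)]
  have hk : ‖z‖/(2-‖z‖) < (Real.exp 1 - 1)/(Real.exp 1 + 1) := by
    rw [div_lt_div_iff₀ (by linarith) (by linarith)]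
    have hmul : ‖z‖ * Real.exp 1 < Real.exp 1 - 1 :=
      (lt_div_iff₀ (by linarith : (0:ℝ) < Real.exp 1)).mp hz
    nlinarith
  have hvk : ‖z * deriv f z / f z - 1‖ < (Real.exp 1 - 1)/(Real.exp 1 + 1) :=
    lt_of_le_of_lt hwb hk
  have hkk1 : (Real.exp 1 - 1)/(Real.exp 1 + 1) < 1 := by
    rw [div_lt_one (by linarith)]; linarith
  have hw2 : z * deriv f z / f z ≠ 2 := by
    intro h
    rw [h] at hvk
    norm_num at hvk
    linarith
  refine ⟨hfz, hw2, ?_⟩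
  have hlog := aux_log (z * deriv f z / f z - 1) hvk
  have e1 : (1:ℂ) + (z * deriv f z / f z - 1) = z * deriv f z / f z := by ring
  have e2 : (1:ℂ) - (z * deriv f z / f z - 1) = 2 - z * deriv f z / f z := by ring
  rw [e1, e2] at hlog
  exact hlog
end
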